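/- arXiv:1908.04750 — 3 statements merged into one kernel-verified Lean document; each statement's English description precedes it below -/
import Mathlib

section
/- Let X₀ ⊆ ℝⁿ, X̃₀ = Λ_{η_x} ∩ X₀, and R(ε) = {(x̃,x) ∈ Λ_{η_x} × ℝⁿ : ‖x̃ − x‖ ≤ ε}. Then R(ε) is a strong ε-approximate alternating simulation relation from the symbolic model to the system, namely: (D1) for every x̃₀ ∈ X̃₀ there exists x₀ ∈ X₀ with (x̃₀, x₀) ∈ R(ε); (D2) every (x̃,x) ∈ R(ε) satisfies ‖x̃ − x‖ ≤ ε; and (D3) for every (x̃,x) ∈ R(ε), every ũ ∈ Ũ and every m ∈ {1,…,M_max}, there exist grid points x̃₁, …, x̃_m ∈ Λ_{η_x} such that for every p ∈ {1,…,m}: x̃_p ∈ G̃(x̃,ũ,p) and ‖x̃_p − φ(x,ũ,p)‖ ≤ ε. (Lemma 2 of the paper.) -/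
/-- The Euclidean state space ℝⁿ. -/
abbrev Euc (n : ℕ) := EuclideanSpace ℝ (Fin n)

/-- `phi f x u m` is the state reached from `x` by applying the input `u`
constantly for `m` time steps, i.e. the `m`-fold iterate of `y ↦ f y u` at `x`. -/
def phi {n nu : ℕ} (f : Euc n → Euc nu → Euc n) (x : Euc n) (u : Euc nu) (m : ℕ) : Euc n :=
  (fun y => f y u)^[m] x

/-- The grid `Λ_η ⊆ ℝⁿ`: points whose coordinates are integer multiples of `2η/√n`. -/
def grid (n : ℕ) (η : ℝ) : Set (Euc n) :=
  { y | ∀ i : Fin n, ∃ a : ℤ, y i = (2 * η / Real.sqrt n) * (a : ℝ) }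

/-- Symbolic transition map: `G̃(x̃,ũ,m) = { x̃⁺ ∈ Λ_{η_x} : ‖x̃⁺ − φ(x̃,ũ,m)‖ ≤ Lᵐ ε + η_x }`. -/
def Gt {n nu : ℕ} (f : Euc n → Euc nu → Euc n) (L ε ηx : ℝ)
    (xt : Euc n) (ut : Euc nu) (m : ℕ) : Set (Euc n) :=
  { x' | x' ∈ grid n ηx ∧ ‖x' - phi f xt ut m‖ ≤ L ^ m * ε + ηx }

/-- The relation `R(ε) = {(x̃,x) ∈ Λ_{η_x} × ℝⁿ : ‖x̃ − x‖ ≤ ε}`. -/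
def RelEps (n : ℕ) (ηx ε : ℝ) : Set (Euc n × Euc n) :=
  { q | q.1 ∈ grid n ηx ∧ ‖q.1 - q.2‖ ≤ ε }


lemma grid_dense {n : ℕ} (hn : 1 ≤ n) (η : ℝ) (hη : 0 < η) (x : Euc n) :
    ∃ g ∈ ({ y | ∀ i : Fin n, ∃ a : ℤ, y i = (2 * η / Real.sqrt n) * (a : ℝ) } : Set (Euc n)),
      ‖g - x‖ ≤ η := by
  have hns : (0:ℝ) < Real.sqrt n := Real.sqrt_pos.2 (by exact_mod_cast hn)
  set c : ℝ := 2 * η / Real.sqrt n with hc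
  have hcpos : 0 < c := by positivity
  set g : Euc n := WithLp.toLp 2 (fun i => c * (round (x i / c) : ℝ)) with hg
  refine ⟨g, fun i => ⟨round (x i / c), rfl⟩, ?_⟩
  have hcoord : ∀ i : Fin n, |g i - x i| ≤ η / Real.sqrt n := by
    intro i
    have h := abs_sub_round (x i / c)
    rw [abs_sub_comm] at h
    have he : g i - x i = c * ((round (x i / c) : ℝ) - x i / c) := by
      rw [hg]; field_simp
    rw [he, abs_mul, abs_of_pos hcpos]
    calc c * |(round (x i / c) : ℝ) - x i / c| ≤ c * (1/2) :=
          mul_le_mul_of_nonneg_left h hcpos.le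
      _ = η / Real.sqrt n := by rw [hc]; field_simp
  rw [EuclideanSpace.norm_eq]
  have hb : ∑ i : Fin n, ‖(g - x) i‖ ^ 2 ≤ ∑ _i : Fin n, (η / Real.sqrt n) ^ 2 := by
    apply Finset.sum_le_sum
    intro i _
    have hsub : (g - x) i = g i - x i := rfl
    rw [hsub, Real.norm_eq_abs]
    have h1 := hcoord i
    have h2 : (0:ℝ) ≤ |g i - x i| := abs_nonneg _
    nlinarith
  calc Real.sqrt (∑ i : Fin n, ‖(g - x) i‖ ^ 2)
      ≤ Real.sqrt (∑ _i : Fin n, (η / Real.sqrt n) ^ 2) := Real.sqrt_le_sqrt hb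
    _ = η := by
        rw [Finset.sum_const, Finset.card_univ, Fintype.card_fin, nsmul_eq_mul]
        rw [div_pow, Real.sq_sqrt (by positivity : (0:ℝ) ≤ (n:ℝ))]
        have hn0 : (n:ℝ) ≠ 0 := by positivity
        have he : (n:ℝ) * (η^2/(n:ℝ)) = η^2 := by field_simp
        rw [he]
        exact Real.sqrt_sq hη.le

lemma phi_lipschitz {n nu : ℕ} (U : Set (Euc nu)) (f : Euc n → Euc nu → Euc n)
    (L : ℝ) (hL0 : 0 ≤ L)
    (hf : ∀ x₁ x₂ : Euc n, ∀ u ∈ U, ‖f x₁ u - f x₂ u‖ ≤ L * ‖x₁ - x₂‖)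
    (x₁ x₂ : Euc n) (u : Euc nu) (hu : u ∈ U) (m : ℕ) :
    ‖phi f x₁ u m - phi f x₂ u m‖ ≤ L ^ m * ‖x₁ - x₂‖ := by
  induction m with
  | zero => simp [phi]
  | succ k ih =>
    have h1 : phi f x₁ u (k+1) = f (phi f x₁ u k) u := by
      simp [phi, Function.iterate_succ_apply']
    have h2 : phi f x₂ u (k+1) = f (phi f x₂ u k) u := by
      simp [phi, Function.iterate_succ_apply']
    rw [h1, h2]
    calc ‖f (phi f x₁ u k) u - f (phi f x₂ u k) u‖
        ≤ L * ‖phi f x₁ u k - phi f x₂ u k‖ := hf (phi f x₁ u k) (phi f x₂ u k) u hu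
      _ ≤ L * (L ^ k * ‖x₁ - x₂‖) := mul_le_mul_of_nonneg_left ih hL0
      _ = L ^ (k+1) * ‖x₁ - x₂‖ := by ring
/-- Lemma 2: `R(ε)` is a strong `ε`-approximate alternating simulation relation
from the symbolic model to the system, i.e. conditions (D1), (D2) and (D3) hold. -/
theorem strong_eps_ASR {n nu : ℕ} (hn : 1 ≤ n)
    (U : Set (Euc nu)) (f : Euc n → Euc nu → Euc n) (L : ℝ) (hL : 0 ≤ L)
    (hf : ∀ x₁ x₂ : Euc n, ∀ u ∈ U, ‖f x₁ u - f x₂ u‖ ≤ L * ‖x₁ - x₂‖)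
    (ηx ηu : ℝ) (hηx : 0 < ηx) (hηu : 0 < ηu)
    (ε : ℝ) (hε : ηx ≤ ε) (Mmax : ℕ) (hM : 1 ≤ Mmax)
    (X₀ : Set (Euc n)) :
    -- (D1): every initial symbolic state `x̃₀ ∈ X̃₀ = Λ_{η_x} ∩ X₀` is related to
    -- some initial state `x₀ ∈ X₀`
    (∀ xt0 ∈ grid n ηx ∩ X₀, ∃ x0 ∈ X₀, (xt0, x0) ∈ RelEps n ηx ε) ∧
    -- (D2): related states are `ε`-close
    (∀ q ∈ RelEps n ηx ε, ‖q.1 - q.2‖ ≤ ε) ∧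
    -- (D3): for every related pair, every symbolic input `ũ ∈ Ũ = Λ_{η_u} ∩ U` and every
    -- `m ∈ {1,…,M_max}`, there are grid points `x̃₁,…,x̃_m` with `x̃_p ∈ G̃(x̃,ũ,p)` and
    -- `‖x̃_p − φ(x,ũ,p)‖ ≤ ε` for every `p ∈ {1,…,m}`
    (∀ q ∈ RelEps n ηx ε, ∀ ut ∈ grid nu ηu ∩ U, ∀ m : ℕ, 1 ≤ m → m ≤ Mmax →
      ∃ xs : ℕ → Euc n, ∀ p : ℕ, 1 ≤ p → p ≤ m →
        xs p ∈ Gt f L ε ηx q.1 ut p ∧ ‖xs p - phi f q.2 ut p‖ ≤ ε) := by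
  refine ⟨?_, ?_, ?_⟩
  · intro xt0 hxt0
    exact ⟨xt0, hxt0.2, hxt0.1, by simp only [sub_self, norm_zero]; linarith⟩
  · intro q hq
    exact hq.2
  · intro q hq ut hut m _ _
    obtain ⟨hgq, hdq⟩ := hq
    choose xs hxs1 hxs2 using fun p : ℕ =>
      grid_dense (n := n) hn ηx hηx (phi f q.2 ut p)
    refine ⟨xs, fun p _ _ => ⟨⟨hxs1 p, ?_⟩, (hxs2 p).trans hε⟩⟩
    have hlip := phi_lipschitz U f L hL hf q.2 q.1 ut hut.2 p
    calc ‖xs p - phi f q.1 ut p‖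
        ≤ ‖xs p - phi f q.2 ut p‖ + ‖phi f q.2 ut p - phi f q.1 ut p‖ := by
          have h := norm_add_le (xs p - phi f q.2 ut p) (phi f q.2 ut p - phi f q.1 ut p)
          rwa [sub_add_sub_cancel] at h
      _ ≤ ηx + L ^ p * ‖q.2 - q.1‖ := add_le_add (hxs2 p) hlip
      _ ≤ ηx + L ^ p * ε := by
          have h2 : ‖q.2 - q.1‖ ≤ ε := by rwa [norm_sub_rev]
          nlinarith [pow_nonneg hL p]
      _ = L ^ p * ε + ηx := by ring
end

section
/- Suppose X_F ⊆ X_S and let x̃₀ ∈ Λ_{η_x} with ℒ(x̃₀) = N < ∞. Then along every controlled trajectory of the symbolic model induced by C̃ starting from x̃₀: (i) the rank strictly decreases at communication times, i.e., ℒ(x̃_{k_{ℓ+1}}) < ℒ(x̃_{k_ℓ}) for every executed round ℓ; (ii) every visited state lies in X̃_S; and (iii) every maximal such trajectory reaches the target grid set within at most N communication rounds: there exists ℓ* ≤ N with x̃_{k_{ℓ*}} ∈ X̃_F and x̃_k ∈ X̃_S for all k ∈ {0,…,k_{ℓ*}}. (Lemma 3 of the paper: the controller C̃ is valid for the symbolic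 model with specification (X̃_S, X̃_F) whenever the initial states lie in P̃_S = ⋃ₙ P⁽ⁿ⁾.) -/
/-- `Int_ε(A)`: points of `A` whose closed `ε`-ball is contained in `A`. -/
def IntEps {n : ℕ} (ε : ℝ) (A : Set (Euc n)) : Set (Euc n) :=
  { x ∈ A | Metric.closedBall x ε ⊆ A }

/-- The predecessor map `Pre(P)` of the reachability game. -/
def Pre {n nu : ℕ} (f : Euc n → Euc nu → Euc n) (L ε ηx : ℝ)
    (Ut : Set (Euc nu)) (Mmax : ℕ) (XtS : Set (Euc n)) (P : Set (Euc n)) : Set (Euc n) :=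
  { xt ∈ XtS | ∃ ut ∈ Ut, ∃ m : ℕ, 1 ≤ m ∧ m ≤ Mmax ∧
      Gt f L ε ηx xt ut m ⊆ P ∧ ∀ p : ℕ, 1 ≤ p → p ≤ m → Gt f L ε ηx xt ut p ⊆ XtS }

/-- The iteration `P⁽⁰⁾ = X̃_F`, `P⁽ⁿ⁺¹⁾ = P⁽ⁿ⁾ ∪ Pre(P⁽ⁿ⁾)` of Algorithm 1. -/
def Pseq {n nu : ℕ} (f : Euc n → Euc nu → Euc n) (L ε ηx : ℝ)
    (Ut : Set (Euc nu)) (Mmax : ℕ) (XtS XtF : Set (Euc n)) : ℕ → Set (Euc n)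
  | 0 => XtF
  | k + 1 => Pseq f L ε ηx Ut Mmax XtS XtF k ∪
      Pre f L ε ηx Ut Mmax XtS (Pseq f L ε ηx Ut Mmax XtS XtF k)

/-- The rank `ℒ(x̃) ∈ ℕ ∪ {∞}` : the least `k` with `x̃ ∈ P⁽ᵏ⁾` (and `∞` if there is none). -/
noncomputable def rankL {n nu : ℕ} (f : Euc n → Euc nu → Euc n) (L ε ηx : ℝ)
    (Ut : Set (Euc nu)) (Mmax : ℕ) (XtS XtF : Set (Euc n)) (xt : Euc n) : ℕ∞ :=
  sInf ((fun k : ℕ => (k : ℕ∞)) '' { k : ℕ | xt ∈ Pseq f L ε ηx Ut Mmax XtS XtF k })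

/-- The symbolic controller `C̃`. -/
def Ct {n nu : ℕ} (f : Euc n → Euc nu → Euc n) (L ε ηx : ℝ)
    (Ut : Set (Euc nu)) (Mmax : ℕ) (XtS XtF : Set (Euc n)) (xt : Euc n) :
    Set (Euc nu × ℕ) :=
  { um | um.1 ∈ Ut ∧ 1 ≤ um.2 ∧ um.2 ≤ Mmax ∧
      (∀ x' ∈ Gt f L ε ηx xt um.1 um.2,
        rankL f L ε ηx Ut Mmax XtS XtF x' < rankL f L ε ηx Ut Mmax XtS XtF xt) ∧
      ∀ p : ℕ, 1 ≤ p → p ≤ um.2 → Gt f L ε ηx xt um.1 p ⊆ XtS }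

section helpers
variable {n nu : ℕ} (f : Euc n → Euc nu → Euc n) (L ε ηx : ℝ)
  (Ut : Set (Euc nu)) (Mmax : ℕ) (XtS XtF : Set (Euc n))

lemma Pseq_mono' {k l : ℕ} (h : k ≤ l) :
    Pseq f L ε ηx Ut Mmax XtS XtF k ⊆ Pseq f L ε ηx Ut Mmax XtS XtF l := by
  induction l with
  | zero => simp_all
  | succ l ih =>
    rcases Nat.le_succ_iff.mp h with h' | h'
    · exact (ih h').trans (Set.subset_union_left)
    · subst h'; rfl

lemma mem_Pseq_iff' {x : Euc n} {k : ℕ} :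
    x ∈ Pseq f L ε ηx Ut Mmax XtS XtF k ↔
      rankL f L ε ηx Ut Mmax XtS XtF x ≤ (k : ℕ∞) := by
  constructor
  · intro hx
    exact sInf_le ⟨k, hx, rfl⟩
  · intro h
    set T : Set ℕ := { j : ℕ | x ∈ Pseq f L ε ηx Ut Mmax XtS XtF j } with hT
    have hTne : T.Nonempty := by
      by_contra h0
      rw [Set.not_nonempty_iff_eq_empty] at h0
      rw [rankL, hT.symm, h0] at h
      simp at h
    have hmem : sInf T ∈ T := Nat.sInf_mem hTne
    have hlb : ((sInf T : ℕ) : ℕ∞) ≤ rankL f L ε ηx Ut Mmax XtS XtF x := by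
      refine le_sInf ?_
      rintro b ⟨t, ht, rfl⟩
      simp only []
      exact_mod_cast Nat.sInf_le ht
    have : sInf T ≤ k := by exact_mod_cast hlb.trans h
    exact Pseq_mono' f L ε ηx Ut Mmax XtS XtF this hmem

lemma Ct_nonempty_of_rank' {x : Euc n} {k : ℕ}
    (hr : rankL f L ε ηx Ut Mmax XtS XtF x = ((k + 1 : ℕ) : ℕ∞)) :
    (Ct f L ε ηx Ut Mmax XtS XtF x).Nonempty := by
  have h1 : x ∈ Pseq f L ε ηx Ut Mmax XtS XtF (k + 1) :=
    (mem_Pseq_iff' f L ε ηx Ut Mmax XtS XtF).mpr hr.le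
  have h2 : x ∉ Pseq f L ε ηx Ut Mmax XtS XtF k := by
    intro hx
    have := (mem_Pseq_iff' f L ε ηx Ut Mmax XtS XtF).mp hx
    rw [hr] at this
    exact_mod_cast (LE.le.not_gt this) (by exact_mod_cast Nat.lt_succ_self k)
  rcases h1 with h1 | ⟨hxS, ut, hut, m, hm1, hmM, hsub, hsafe⟩
  · exact absurd h1 h2
  refine ⟨(ut, m), hut, hm1, hmM, ?_, hsafe⟩
  intro x' hx'
  have := (mem_Pseq_iff' f L ε ηx Ut Mmax XtS XtF).mp (hsub hx')
  rw [hr]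
  exact lt_of_le_of_lt this (by exact_mod_cast Nat.lt_succ_self k)

lemma Pseq_subset_XtS' (hFS' : XtF ⊆ XtS) (k : ℕ) :
    Pseq f L ε ηx Ut Mmax XtS XtF k ⊆ XtS := by
  induction k with
  | zero => exact hFS'
  | succ k ih =>
    rintro x (hx | hx)
    · exact ih hx
    · exact hx.1

end helpers

/-- Lemma 3: validity of the symbolic controller `C̃`. Along every maximal controlled
trajectory of the symbolic model induced by `C̃` starting from a state `x̃₀` of finite
rank `N`: (i) the rank strictly decreases at communication times; (ii) every visited
state lies in `X̃_S`; (iii) the trajectory reaches `X̃_F` within at most `N` rounds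
while remaining in `X̃_S`. A trajectory has communication times `k₀ = 0`,
`k_{ℓ+1} = k_ℓ + m_ℓ` with `(ũ_ℓ, m_ℓ) ∈ C̃(x̃_{k_ℓ})` and
`x̃_{k_ℓ+p} ∈ G̃(x̃_{k_ℓ}, ũ_ℓ, p)` for `p ∈ {1,…,m_ℓ}`, executed for all rounds
`ℓ < numRounds ∈ ℕ∞`; maximality means it is infinite or stops only where `C̃ = ∅`. -/
theorem symbolic_controller_valid {n nu : ℕ} (hn : 1 ≤ n)
    (U : Set (Euc nu)) (f : Euc n → Euc nu → Euc n) (L : ℝ) (hL : 0 ≤ L)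
    (hf : ∀ x₁ x₂ : Euc n, ∀ u ∈ U, ‖f x₁ u - f x₂ u‖ ≤ L * ‖x₁ - x₂‖)
    (ηx ηu : ℝ) (hηx : 0 < ηx) (hηu : 0 < ηu)
    (ε : ℝ) (hε : ηx ≤ ε) (Mmax : ℕ) (hM : 1 ≤ Mmax)
    (XS XF : Set (Euc n)) (hFS : XF ⊆ XS)
    (Ut : Set (Euc nu)) (hUt : Ut = grid nu ηu ∩ U)
    (XtS : Set (Euc n)) (hXtS : XtS = grid n ηx ∩ IntEps ε XS)
    (XtF : Set (Euc n)) (hXtF : XtF = grid n ηx ∩ IntEps ε XF)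
    -- the initial symbolic state, of finite rank `ℒ(x̃₀) = N`
    (xt0 : Euc n) (hxt0 : xt0 ∈ grid n ηx)
    (N : ℕ) (hrank : rankL f L ε ηx Ut Mmax XtS XtF xt0 = (N : ℕ∞))
    -- a maximal controlled trajectory of the symbolic model induced by `C̃`
    (kt : ℕ → ℕ) (hk0 : kt 0 = 0)
    (xt : ℕ → Euc n) (hx0 : xt 0 = xt0)
    (u : ℕ → Euc nu) (ms : ℕ → ℕ)
    (numRounds : ℕ∞)
    (hstep : ∀ ℓ : ℕ, (ℓ : ℕ∞) < numRounds →
      (u ℓ, ms ℓ) ∈ Ct f L ε ηx Ut Mmax XtS XtF (xt (kt ℓ)) ∧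
      kt (ℓ + 1) = kt ℓ + ms ℓ ∧
      ∀ p : ℕ, 1 ≤ p → p ≤ ms ℓ → xt (kt ℓ + p) ∈ Gt f L ε ηx (xt (kt ℓ)) (u ℓ) p)
    (hmax : ∀ ℓ : ℕ, (ℓ : ℕ∞) = numRounds →
      Ct f L ε ηx Ut Mmax XtS XtF (xt (kt ℓ)) = ∅) :
    -- (i) the rank strictly decreases at communication times
    (∀ ℓ : ℕ, (ℓ : ℕ∞) < numRounds →
      rankL f L ε ηx Ut Mmax XtS XtF (xt (kt (ℓ + 1))) <
        rankL f L ε ηx Ut Mmax XtS XtF (xt (kt ℓ))) ∧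
    -- (ii) every visited state lies in `X̃_S`
    (xt 0 ∈ XtS ∧ ∀ ℓ : ℕ, (ℓ : ℕ∞) < numRounds →
      ∀ k : ℕ, k ≤ kt (ℓ + 1) → xt k ∈ XtS) ∧
    -- (iii) the trajectory reaches `X̃_F` within at most `N` communication rounds
    (∃ ls : ℕ, ls ≤ N ∧ (ls : ℕ∞) ≤ numRounds ∧ xt (kt ls) ∈ XtF ∧
      ∀ k : ℕ, k ≤ kt ls → xt k ∈ XtS) := by

  have hFS' : XtF ⊆ XtS := by
    rw [hXtS, hXtF]
    rintro x ⟨hg, hA, hB⟩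
    exact ⟨hg, hFS hA, fun y hy => hFS (hB hy)⟩
  set r : ℕ → ℕ∞ := fun ℓ => rankL f L ε ηx Ut Mmax XtS XtF (xt (kt ℓ)) with hr
  have hr0 : r 0 = (N : ℕ∞) := by rw [hr]; simp only [hk0, hx0]; exact hrank
  -- (i)
  have hdec : ∀ ℓ : ℕ, (ℓ : ℕ∞) < numRounds → r (ℓ + 1) < r ℓ := by
    intro ℓ hℓ
    obtain ⟨⟨_, hm1, _, hrlt, _⟩, hkeq, htraj⟩ := hstep ℓ hℓ
    have hmem : xt (kt (ℓ + 1)) ∈ Gt f L ε ηx (xt (kt ℓ)) (u ℓ) (ms ℓ) := by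
      rw [hkeq]; exact htraj (ms ℓ) hm1 le_rfl
    exact hrlt _ hmem
  -- XtS membership of initial state
  have hx0S : xt 0 ∈ XtS := by
    have : xt 0 ∈ Pseq f L ε ηx Ut Mmax XtS XtF N := by
      rw [mem_Pseq_iff', hx0, hrank]
    exact Pseq_subset_XtS' f L ε ηx Ut Mmax XtS XtF hFS' N this
  -- (ii) core: all states up to time kt ℓ are in XtS, for ℓ ≤ numRounds
  have hS : ∀ ℓ : ℕ, (ℓ : ℕ∞) ≤ numRounds → ∀ k : ℕ, k ≤ kt ℓ → xt k ∈ XtS := by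
    intro ℓ
    induction ℓ with
    | zero =>
      intro _ k hk
      rw [hk0] at hk
      interval_cases k
      exact hx0S
    | succ ℓ ih =>
      intro hle k hk
      have hlt : (ℓ : ℕ∞) < numRounds :=
        lt_of_lt_of_le (by exact_mod_cast Nat.lt_succ_self ℓ) hle
      obtain ⟨⟨_, hm1, _, _, hsafe⟩, hkeq, htraj⟩ := hstep ℓ hlt
      rcases le_or_gt k (kt ℓ) with h | h
      · exact ih hlt.le k h
      · rw [hkeq] at hk
        have hp1 : 1 ≤ k - kt ℓ := by omega
        have hp2 : k - kt ℓ ≤ ms ℓ := by omega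
        have hkeq2 : k = kt ℓ + (k - kt ℓ) := by omega
        rw [hkeq2]
        exact hsafe (k - kt ℓ) hp1 hp2 (htraj (k - kt ℓ) hp1 hp2)
  have hlt_of_succ_le : ∀ ℓ : ℕ, ((ℓ + 1 : ℕ) : ℕ∞) ≤ numRounds ↔ (ℓ : ℕ∞) < numRounds := by
    intro ℓ
    rw [show ((ℓ + 1 : ℕ) : ℕ∞) = (ℓ : ℕ∞) + 1 by exact_mod_cast rfl]
    exact ENat.add_one_le_iff (ENat.coe_ne_top ℓ)
  -- (iii) key induction
  have hmain : ∀ ℓ : ℕ,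
      (∃ ls : ℕ, ls ≤ ℓ ∧ (ls : ℕ∞) ≤ numRounds ∧ r ls = 0) ∨
      ((ℓ : ℕ∞) ≤ numRounds ∧ r ℓ + (ℓ : ℕ∞) ≤ (N : ℕ∞)) := by
    intro ℓ
    induction ℓ with
    | zero =>
      right
      refine ⟨by simp, ?_⟩
      rw [hr0]; simp
    | succ ℓ ih =>
      rcases ih with ⟨ls, h1, h2, h3⟩ | ⟨hle, hbd⟩
      · exact Or.inl ⟨ls, h1.trans (Nat.le_succ ℓ), h2, h3⟩
      by_cases hz : r ℓ = 0
      · exact Or.inl ⟨ℓ, Nat.le_succ ℓ, hle, hz⟩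
      · -- r ℓ is finite and nonzero, so of form k+1
        have hfin : r ℓ ≠ ⊤ := by
          intro htop
          rw [htop] at hbd
          simp at hbd
        obtain ⟨j, hj⟩ := WithTop.ne_top_iff_exists.mp hfin
        have hj0 : j ≠ 0 := by rintro rfl; exact hz (by exact_mod_cast hj.symm)
        obtain ⟨k, rfl⟩ := Nat.exists_eq_succ_of_ne_zero hj0
        have hCt : (Ct f L ε ηx Ut Mmax XtS XtF (xt (kt ℓ))).Nonempty :=
          Ct_nonempty_of_rank' f L ε ηx Ut Mmax XtS XtF (by exact_mod_cast hj.symm)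
        have hne : (ℓ : ℕ∞) ≠ numRounds := by
          intro heq
          rw [hmax ℓ heq] at hCt
          exact Set.not_nonempty_empty hCt
        have hlt : (ℓ : ℕ∞) < numRounds := lt_of_le_of_ne hle hne
        right
        refine ⟨(hlt_of_succ_le ℓ).mpr hlt, ?_⟩
        have hdlt : r (ℓ + 1) < r ℓ := hdec ℓ hlt
        have hfin2 : r (ℓ + 1) ≠ ⊤ := (hdlt.trans_le le_top).ne
        have h1 : r (ℓ + 1) + 1 ≤ r ℓ := (ENat.add_one_le_iff hfin2).mpr hdlt
        calc r (ℓ + 1) + ((ℓ + 1 : ℕ) : ℕ∞)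
            = (r (ℓ + 1) + 1) + (ℓ : ℕ∞) := by
              rw [show ((ℓ + 1 : ℕ) : ℕ∞) = (ℓ : ℕ∞) + 1 by exact_mod_cast rfl]; ring
          _ ≤ r ℓ + (ℓ : ℕ∞) := add_le_add_left h1 _
          _ ≤ (N : ℕ∞) := hbd
  have hfinal : ∃ ls : ℕ, ls ≤ N ∧ (ls : ℕ∞) ≤ numRounds ∧ r ls = 0 := by
    rcases hmain N with ⟨ls, h1, h2, h3⟩ | ⟨hle, hbd⟩
    · exact ⟨ls, h1, h2, h3⟩
    · refine ⟨N, le_rfl, hle, ?_⟩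
      by_contra hz
      have : 1 + (N : ℕ∞) ≤ r N + (N : ℕ∞) :=
        add_le_add_left (ENat.one_le_iff_ne_zero.mpr hz) _
      have h2 : (N : ℕ∞) + 1 ≤ (N : ℕ∞) := by
        rw [add_comm]; exact this.trans hbd
      exact ((ENat.add_one_le_iff (ENat.coe_ne_top N)).mp h2).ne rfl
  obtain ⟨ls, hls1, hls2, hls3⟩ := hfinal
  refine ⟨hdec, ⟨hx0S, ?_⟩, ls, hls1, hls2, ?_, fun k hk => hS ls hls2 k hk⟩
  · intro ℓ hℓ k hk
    exact hS (ℓ + 1) ((hlt_of_succ_le ℓ).mpr hℓ) k hk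
  · have : xt (kt ls) ∈ Pseq f L ε ηx Ut Mmax XtS XtF 0 := by
      rw [mem_Pseq_iff']
      rw [hr] at hls3
      simp [hls3]
    exact this
end

section
/- Suppose X_F ⊆ X_S. Let x̃ ∈ Λ_{η_x} and x ∈ ℝⁿ with ‖x̃ − x‖ ≤ ε, let (ũ,m) ∈ C̃(x̃), and set x_p = φ(x,ũ,p) for p ∈ {1,…,m}. Then: (i) x_p ∈ X_S for every p ∈ {1,…,m}; and (ii) there exists a grid point x̃⁺ ∈ G̃(x̃,ũ,m) with ‖x̃⁺ − x_m‖ ≤ ε (any grid point of Λ_{η_x} nearest to x_m works), and consequently ℒ(x̃⁺) < ℒ(x̃). (This is the one-round controller-refinement step established in the proof of Theorem 1.) -/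
lemma exists_grid_close {n : ℕ} (hn : 1 ≤ n) (η : ℝ) (hη : 0 < η) (z : Euc n) :
    ∃ g ∈ grid n η, ‖g - z‖ ≤ η := by
  have hsn : (0:ℝ) < Real.sqrt n := Real.sqrt_pos.mpr (by exact_mod_cast hn)
  set h : ℝ := 2 * η / Real.sqrt n with hh
  have hhpos : 0 < h := by positivity
  refine ⟨WithLp.toLp 2 (fun i => h * (round (z i / h) : ℝ) : ∀ _ : Fin n, ℝ), fun i => ⟨round (z i / h), by rw [hh]⟩, ?_⟩
  have hcoord : ∀ i : Fin n, |h * (round (z i / h) : ℝ) - z i| ≤ η / Real.sqrt n := by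
    intro i
    have : h * (round (z i / h) : ℝ) - z i = h * ((round (z i / h) : ℝ) - z i / h) := by
      field_simp
    rw [this, abs_mul, abs_of_pos hhpos]
    have : |(round (z i / h) : ℝ) - z i / h| ≤ 1/2 := by
      rw [abs_sub_comm]; exact abs_sub_round (z i / h)
    calc h * |(round (z i / h) : ℝ) - z i / h| ≤ h * (1/2) := by
            exact mul_le_mul_of_nonneg_left this hhpos.le
      _ = η / Real.sqrt n := by rw [hh]; ring
  rw [EuclideanSpace.norm_eq]
  have hsum : ∑ i : Fin n, ‖(WithLp.toLp 2 (fun i => h * (round (z i / h) : ℝ)) : Euc n) i - z i‖ ^ 2 ≤ η ^ 2 := by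
    have : ∀ i : Fin n, ‖(WithLp.toLp 2 (fun i => h * (round (z i / h) : ℝ)) : Euc n) i - z i‖ ^ 2
        ≤ η ^ 2 / n := by
      intro i
      have h1 : ‖(WithLp.toLp 2 (fun i => h * (round (z i / h) : ℝ)) : Euc n) i - z i‖
          ≤ η / Real.sqrt n := by
        simpa [Real.norm_eq_abs] using hcoord i
      have h2 : (η / Real.sqrt n) ^ 2 = η ^ 2 / n := by
        rw [div_pow, Real.sq_sqrt (by positivity : (0:ℝ) ≤ (n:ℝ))]
      calc ‖(WithLp.toLp 2 (fun i => h * (round (z i / h) : ℝ)) : Euc n) i - z i‖ ^ 2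
          ≤ (η / Real.sqrt n) ^ 2 := by
            exact pow_le_pow_left₀ (norm_nonneg _) h1 2
        _ = η ^ 2 / n := h2
    calc ∑ i : Fin n, ‖(WithLp.toLp 2 (fun i => h * (round (z i / h) : ℝ)) : Euc n) i - z i‖ ^ 2
        ≤ ∑ _i : Fin n, η ^ 2 / n := Finset.sum_le_sum fun i _ => this i
      _ = n * (η ^ 2 / n) := by simp [mul_comm]
      _ = η ^ 2 := by field_simp
  calc Real.sqrt (∑ i : Fin n, ‖(WithLp.toLp 2 (fun i => h * (round (z i / h) : ℝ)) : Euc n) i - z i‖ ^ 2)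
      ≤ Real.sqrt (η ^ 2) := Real.sqrt_le_sqrt hsum
    _ = η := Real.sqrt_sq hη.le

lemma phi_lip {n nu : ℕ} (U : Set (Euc nu)) (f : Euc n → Euc nu → Euc n) (L : ℝ) (hL : 0 ≤ L)
    (hf : ∀ x₁ x₂ : Euc n, ∀ u ∈ U, ‖f x₁ u - f x₂ u‖ ≤ L * ‖x₁ - x₂‖)
    (x₁ x₂ : Euc n) (u : Euc nu) (hu : u ∈ U) (p : ℕ) :
    ‖phi f x₁ u p - phi f x₂ u p‖ ≤ L ^ p * ‖x₁ - x₂‖ := by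
  induction p with
  | zero => simp [phi]
  | succ p ih =>
    have h1 : phi f x₁ u (p+1) = f (phi f x₁ u p) u := Function.iterate_succ_apply' _ _ _
    have h2 : phi f x₂ u (p+1) = f (phi f x₂ u p) u := Function.iterate_succ_apply' _ _ _
    rw [h1, h2]
    calc ‖f (phi f x₁ u p) u - f (phi f x₂ u p) u‖
        ≤ L * ‖phi f x₁ u p - phi f x₂ u p‖ := hf _ _ u hu
      _ ≤ L * (L ^ p * ‖x₁ - x₂‖) := mul_le_mul_of_nonneg_left ih hL
      _ = L ^ (p+1) * ‖x₁ - x₂‖ := by ring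

/-- One-round controller-refinement step (from the proof of Theorem 1): if
`‖x̃ − x‖ ≤ ε` with `x̃ ∈ Λ_{η_x}` and `(ũ,m) ∈ C̃(x̃)`, and `x_p = φ(x,ũ,p)`, then
(i) `x_p ∈ X_S` for all `p ∈ {1,…,m}`, and (ii) there is `x̃⁺ ∈ G̃(x̃,ũ,m)` with
`‖x̃⁺ − x_m‖ ≤ ε`, and consequently `ℒ(x̃⁺) < ℒ(x̃)`. -/
theorem refinement_step {n nu : ℕ} (hn : 1 ≤ n)
    (U : Set (Euc nu)) (f : Euc n → Euc nu → Euc n) (L : ℝ) (hL : 0 ≤ L)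
    (hf : ∀ x₁ x₂ : Euc n, ∀ u ∈ U, ‖f x₁ u - f x₂ u‖ ≤ L * ‖x₁ - x₂‖)
    (ηx ηu : ℝ) (hηx : 0 < ηx) (hηu : 0 < ηu)
    (ε : ℝ) (hε : ηx ≤ ε) (Mmax : ℕ) (hM : 1 ≤ Mmax)
    (XS XF : Set (Euc n)) (hFS : XF ⊆ XS)
    (Ut : Set (Euc nu)) (hUt : Ut = grid nu ηu ∩ U)
    (XtS : Set (Euc n)) (hXtS : XtS = grid n ηx ∩ IntEps ε XS)
    (XtF : Set (Euc n)) (hXtF : XtF = grid n ηx ∩ IntEps ε XF)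
    (xt : Euc n) (hxt : xt ∈ grid n ηx)
    (x : Euc n) (hclose : ‖xt - x‖ ≤ ε)
    (ut : Euc nu) (m : ℕ) (hum : (ut, m) ∈ Ct f L ε ηx Ut Mmax XtS XtF xt) :
    -- (i) the real trajectory stays in the safety set
    (∀ p : ℕ, 1 ≤ p → p ≤ m → phi f x ut p ∈ XS) ∧
    -- (ii) there is a successor grid point `ε`-close to `x_m`, whose rank has decreased
    (∃ xtp ∈ Gt f L ε ηx xt ut m, ‖xtp - phi f x ut m‖ ≤ ε ∧
      rankL f L ε ηx Ut Mmax XtS XtF xtp < rankL f L ε ηx Ut Mmax XtS XtF xt) := by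
  obtain ⟨hut, hm1, hmM, hrank, hsafe⟩ := hum
  have hεpos : 0 < ε := lt_of_lt_of_le hηx hε
  have huU : ut ∈ U := by rw [hUt] at hut; exact hut.2
  -- key: nearest grid point to phi f x ut p lies in Gt xt ut p and is ηx-close
  have key : ∀ p : ℕ, ∃ g ∈ Gt f L ε ηx xt ut p, ‖g - phi f x ut p‖ ≤ ηx := by
    intro p
    obtain ⟨g, hg, hgc⟩ := exists_grid_close hn ηx hηx (phi f x ut p)
    refine ⟨g, ⟨hg, ?_⟩, hgc⟩
    have htraj : ‖phi f x ut p - phi f xt ut p‖ ≤ L ^ p * ε := by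
      calc ‖phi f x ut p - phi f xt ut p‖ ≤ L ^ p * ‖x - xt‖ :=
            phi_lip U f L hL hf x xt ut huU p
        _ ≤ L ^ p * ε := by
            have : ‖x - xt‖ ≤ ε := by rwa [norm_sub_rev] at hclose
            exact mul_le_mul_of_nonneg_left this (pow_nonneg hL p)
    calc ‖g - phi f xt ut p‖
        ≤ ‖g - phi f x ut p‖ + ‖phi f x ut p - phi f xt ut p‖ := norm_sub_le_norm_sub_add_norm_sub _ _ _
      _ ≤ ηx + L ^ p * ε := add_le_add hgc htraj
      _ = L ^ p * ε + ηx := by ring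
  constructor
  · intro p hp1 hpm
    obtain ⟨g, hgG, hgc⟩ := key p
    have hgS : g ∈ XtS := hsafe p hp1 hpm hgG
    rw [hXtS] at hgS
    have hball : Metric.closedBall g ε ⊆ XS := hgS.2.2
    apply hball
    rw [Metric.mem_closedBall, dist_eq_norm, norm_sub_rev]
    exact le_trans hgc hε
  · obtain ⟨g, hgG, hgc⟩ := key m
    exact ⟨g, hgG, le_trans hgc hε, hrank g hgG⟩
end
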